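/- If A ∈ ℂ^(n×n) and B ∈ ℂ^(m×m) are diagonalizable with A = U D_A U⁻¹ and Bᴴ = V D_{Bᴴ} V⁻¹, then the Sylvester operator S(X) = AX + XB is a normal operator on ℂ^(n×m) equipped with the inner product ⟨X, Y⟩_{U,V} = ⟨U⁻¹ X V⁻ᴴ, U⁻¹ Y V⁻ᴴ⟩_F. -/
import Mathlib


open Matrix

/-- The Frobenius inner product ⟨X, Y⟩_F = trace(Yᴴ X). -/
noncomputable def froInner {n m : ℕ} (X Y : Matrix (Fin n) (Fin m) ℂ) : ℂ :=
  (Yᴴ * X).trace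

/-- The inner product ⟨X,Y⟩_{U,V}. -/
noncomputable def uvInner {n m : ℕ} (U : Matrix (Fin n) (Fin n) ℂ)
    (V : Matrix (Fin m) (Fin m) ℂ) (X Y : Matrix (Fin n) (Fin m) ℂ) : ℂ :=
  froInner (U⁻¹ * X * (V⁻¹)ᴴ) (U⁻¹ * Y * (V⁻¹)ᴴ)

lemma diag_comm {k : ℕ} {D E : Matrix (Fin k) (Fin k) ℂ}
    (hD : D.IsDiag) (hE : E.IsDiag) : D * E = E * D := by
  rw [← hD.diagonal_diag, ← hE.diagonal_diag, diagonal_mul_diagonal,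
    diagonal_mul_diagonal]
  exact congrArg diagonal (funext fun i => mul_comm _ _)

theorem stmt3 {n m : ℕ} (A U DA : Matrix (Fin n) (Fin n) ℂ)
    (B V DBH : Matrix (Fin m) (Fin m) ℂ)
    (hU : IsUnit U.det) (hV : IsUnit V.det)
    (hDA : DA.IsDiag) (hDBH : DBH.IsDiag)
    (hA : A = U * DA * U⁻¹) (hB : Bᴴ = V * DBH * V⁻¹) :
    ∃ Sstar : Matrix (Fin n) (Fin m) ℂ →ₗ[ℂ] Matrix (Fin n) (Fin m) ℂ,
      (∀ X Y, uvInner U V (A * X + X * B) Y = uvInner U V X (Sstar Y)) ∧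
      (∀ X, A * (Sstar X) + (Sstar X) * B = Sstar (A * X + X * B)) := by
  have hB' : B = (V⁻¹)ᴴ * DBHᴴ * Vᴴ := by
    have := congrArg conjTranspose hB
    simpa [conjTranspose_mul, Matrix.mul_assoc] using this
  have hUU : U⁻¹ * U = 1 := nonsing_inv_mul U hU
  have hUU' : U * U⁻¹ = 1 := mul_nonsing_inv U hU
  have hVV : Vᴴ * (V⁻¹)ᴴ = 1 := by
    rw [← conjTranspose_mul, nonsing_inv_mul V hV, conjTranspose_one]
  have hVV' : (V⁻¹)ᴴ * Vᴴ = 1 := by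
    rw [← conjTranspose_mul, mul_nonsing_inv V hV, conjTranspose_one]
  set A' : Matrix (Fin n) (Fin n) ℂ := U * DAᴴ * U⁻¹ with hA'
  set B' : Matrix (Fin m) (Fin m) ℂ := (V⁻¹)ᴴ * DBH * Vᴴ with hB2
  refine ⟨{ toFun := fun Y => A' * Y + Y * B'
            map_add' := by intros; simp only [Matrix.mul_add, Matrix.add_mul] <;> abel
            map_smul' := by
              intros c Y
              simp [Matrix.mul_smul, Matrix.smul_mul, smul_add] }, ?_, ?_⟩
  · intro X Y
    simp only [LinearMap.coe_mk, AddHom.coe_mk]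
    have key1 : U⁻¹ * (A * X + X * B) * (V⁻¹)ᴴ
        = DA * (U⁻¹ * X * (V⁻¹)ᴴ) + (U⁻¹ * X * (V⁻¹)ᴴ) * DBHᴴ := by
      rw [hA, hB']
      rw [Matrix.mul_add, Matrix.add_mul]
      congr 1
      · calc U⁻¹ * (U * DA * U⁻¹ * X) * (V⁻¹)ᴴ
            = (U⁻¹ * U) * DA * (U⁻¹ * X * (V⁻¹)ᴴ) := by simp only [Matrix.mul_add, Matrix.add_mul, Matrix.mul_assoc, Matrix.one_mul, Matrix.mul_one] <;> abel
          _ = DA * (U⁻¹ * X * (V⁻¹)ᴴ) := by rw [hUU, Matrix.one_mul]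
      · calc U⁻¹ * (X * ((V⁻¹)ᴴ * DBHᴴ * Vᴴ)) * (V⁻¹)ᴴ
            = (U⁻¹ * X * (V⁻¹)ᴴ) * DBHᴴ * (Vᴴ * (V⁻¹)ᴴ) := by simp only [Matrix.mul_add, Matrix.add_mul, Matrix.mul_assoc, Matrix.one_mul, Matrix.mul_one] <;> abel
          _ = U⁻¹ * X * (V⁻¹)ᴴ * DBHᴴ := by rw [hVV, Matrix.mul_one]
    have key2 : U⁻¹ * (A' * Y + Y * B') * (V⁻¹)ᴴ
        = DAᴴ * (U⁻¹ * Y * (V⁻¹)ᴴ) + (U⁻¹ * Y * (V⁻¹)ᴴ) * DBH := by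
      rw [hA', hB2]
      rw [Matrix.mul_add, Matrix.add_mul]
      congr 1
      · calc U⁻¹ * (U * DAᴴ * U⁻¹ * Y) * (V⁻¹)ᴴ
            = (U⁻¹ * U) * DAᴴ * (U⁻¹ * Y * (V⁻¹)ᴴ) := by simp only [Matrix.mul_add, Matrix.add_mul, Matrix.mul_assoc, Matrix.one_mul, Matrix.mul_one] <;> abel
          _ = DAᴴ * (U⁻¹ * Y * (V⁻¹)ᴴ) := by rw [hUU, Matrix.one_mul]
      · calc U⁻¹ * (Y * ((V⁻¹)ᴴ * DBH * Vᴴ)) * (V⁻¹)ᴴ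
            = (U⁻¹ * Y * (V⁻¹)ᴴ) * DBH * (Vᴴ * (V⁻¹)ᴴ) := by simp only [Matrix.mul_add, Matrix.add_mul, Matrix.mul_assoc, Matrix.one_mul, Matrix.mul_one] <;> abel
          _ = U⁻¹ * Y * (V⁻¹)ᴴ * DBH := by rw [hVV, Matrix.mul_one]
    rw [uvInner, uvInner, key1, key2]
    set Xt := U⁻¹ * X * (V⁻¹)ᴴ
    set Yt := U⁻¹ * Y * (V⁻¹)ᴴ
    simp only [froInner, conjTranspose_add, conjTranspose_mul,
      conjTranspose_conjTranspose, Matrix.add_mul, Matrix.mul_add, trace_add,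
      Matrix.mul_assoc]
    congr 1
    rw [← Matrix.mul_assoc, trace_mul_comm]
  · intro X
    simp only [LinearMap.coe_mk, AddHom.coe_mk]
    have hAA' : A * A' = A' * A := by
      rw [hA, hA']
      calc U * DA * U⁻¹ * (U * DAᴴ * U⁻¹)
          = U * (DA * ((U⁻¹ * U) * DAᴴ)) * U⁻¹ := by simp only [Matrix.mul_add, Matrix.add_mul, Matrix.mul_assoc, Matrix.one_mul, Matrix.mul_one] <;> abel
        _ = U * (DA * DAᴴ) * U⁻¹ := by rw [hUU, Matrix.one_mul]
        _ = U * (DAᴴ * DA) * U⁻¹ := by rw [diag_comm hDA hDA.conjTranspose]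
        _ = U * (DAᴴ * ((U⁻¹ * U) * DA)) * U⁻¹ := by rw [hUU, Matrix.one_mul]
        _ = U * DAᴴ * U⁻¹ * (U * DA * U⁻¹) := by simp only [Matrix.mul_add, Matrix.add_mul, Matrix.mul_assoc, Matrix.one_mul, Matrix.mul_one] <;> abel
    have hBB' : B * B' = B' * B := by
      rw [hB', hB2]
      calc (V⁻¹)ᴴ * DBHᴴ * Vᴴ * ((V⁻¹)ᴴ * DBH * Vᴴ)
          = (V⁻¹)ᴴ * (DBHᴴ * ((Vᴴ * (V⁻¹)ᴴ) * DBH)) * Vᴴ := by simp only [Matrix.mul_add, Matrix.add_mul, Matrix.mul_assoc, Matrix.one_mul, Matrix.mul_one] <;> abel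
        _ = (V⁻¹)ᴴ * (DBHᴴ * DBH) * Vᴴ := by rw [hVV, Matrix.one_mul]
        _ = (V⁻¹)ᴴ * (DBH * DBHᴴ) * Vᴴ := by rw [diag_comm hDBH.conjTranspose hDBH]
        _ = (V⁻¹)ᴴ * (DBH * ((Vᴴ * (V⁻¹)ᴴ) * DBHᴴ)) * Vᴴ := by rw [hVV, Matrix.one_mul]
        _ = (V⁻¹)ᴴ * DBH * Vᴴ * ((V⁻¹)ᴴ * DBHᴴ * Vᴴ) := by simp only [Matrix.mul_add, Matrix.add_mul, Matrix.mul_assoc, Matrix.one_mul, Matrix.mul_one] <;> abel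
    calc A * (A' * X + X * B') + (A' * X + X * B') * B
        = (A * A') * X + A * X * B' + A' * (X * B) + X * (B' * B) := by simp only [Matrix.mul_add, Matrix.add_mul, Matrix.mul_assoc, Matrix.one_mul, Matrix.mul_one] <;> abel
      _ = (A' * A) * X + A * X * B' + A' * (X * B) + X * (B * B') := by
          rw [hAA', hBB']
      _ = A' * (A * X + X * B) + (A * X + X * B) * B' := by simp only [Matrix.mul_add, Matrix.add_mul, Matrix.mul_assoc, Matrix.one_mul, Matrix.mul_one] <;> abel
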